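/- In the setting of Construction 2 (s ≤ T, at most T corrupted packets, indices i_1, i_2 with i_2 - i_1 ∈ {s,...,2T+1-s} mod 2T+1, multisets A_ℓ, B_ℓ and most frequent candidates ξ_ℓ as above): if F_{B_1}(ξ_1) > T - F_{A_2}(ξ_2) and F_{B_1}(ξ_1) ≥ s + F_{A_2}(ξ_2) - T, then ξ_1 = x_{i_1}. -/

import Mathlib

/-- Frequency of the value `v` among the candidates of `x_i`, i.e. over the packets `j`
whose content includes coordinate `i` (those with `(i - j).val ≥ s`). -/
def candFreqA {A : Type*} [DecidableEq A] (T s : ℕ)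
    (xr : ZMod (2 * T + 1) → ZMod (2 * T + 1) → A) (i : ZMod (2 * T + 1)) (v : A) : ℕ :=
  (Finset.univ.filter (fun j : ZMod (2 * T + 1) => s ≤ (i - j).val ∧ xr i j = v)).card

/-- Frequency of the value `v` among the candidates of `x_i` coming from the `s` packets
that do not contain coordinate `i'` (those `j ∈ S_{i'-s+1}`, i.e. `(i' - j).val < s`). -/
def candFreqB {A : Type*} [DecidableEq A] (T s : ℕ)
    (xr : ZMod (2 * T + 1) → ZMod (2 * T + 1) → A) (i i' : ZMod (2 * T + 1)) (v : A) : ℕ :=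
  (Finset.univ.filter (fun j : ZMod (2 * T + 1) => (i' - j).val < s ∧ xr i j = v)).card

/-- Lemma 4(3): in Construction 2 with at most `T` corrupted packets, if
`F_{B₁}(ξ₁) > T - F_{A₂}(ξ₂)` and `F_{B₁}(ξ₁) ≥ s + F_{A₂}(ξ₂) - T`, then `ξ₁` is correct. -/
theorem stmt_18 (T s : ℕ) (hs : 1 ≤ s) (hsT : s ≤ T) (A : Type*) [DecidableEq A]
    (x : ZMod (2 * T + 1) → A)
    (xr : ZMod (2 * T + 1) → ZMod (2 * T + 1) → A)
    (E : Finset (ZMod (2 * T + 1))) (hE : E.card ≤ T)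
    (hgood : ∀ i j, s ≤ (i - j).val → j ∉ E → xr i j = x i)
    (i₁ i₂ : ZMod (2 * T + 1))
    (hsep : (i₂ - i₁).val ∈ Finset.Icc s (2 * T + 1 - s))
    (ξ₁ ξ₂ : A)
    (hξ₁ : ∀ v : A, candFreqA T s xr i₁ v ≤ candFreqA T s xr i₁ ξ₁)
    (hξ₂ : ∀ v : A, candFreqA T s xr i₂ v ≤ candFreqA T s xr i₂ ξ₂)
    (hU : (T : ℤ) - candFreqA T s xr i₂ ξ₂ < (candFreqB T s xr i₁ i₂ ξ₁ : ℤ))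
    (hZ : (s : ℤ) + candFreqA T s xr i₂ ξ₂ - T ≤ (candFreqB T s xr i₁ i₂ ξ₁ : ℤ)) :
    ξ₁ = x i₁ := by
  by_contra hne
  classical
  obtain ⟨hd1, hd2⟩ := Finset.mem_Icc.mp hsep
  have key : ∀ j : ZMod (2*T+1), (i₂ - j).val < s → s ≤ (i₁ - j).val := by
    intro j hj
    have hdn : (i₂ - i₁).val < 2*T+1 := ZMod.val_lt _
    have hne2 : i₂ - i₁ ≠ 0 := by
      intro h; rw [h, ZMod.val_zero] at hd1; omega
    have hneg : (i₁ - i₂).val = 2*T+1 - (i₂ - i₁).val := by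
      have h1 : i₁ - i₂ = -(i₂ - i₁) := by ring
      rw [h1, ZMod.neg_val, if_neg hne2]
    have heq : i₁ - j = (i₂ - j) + (i₁ - i₂) := by ring
    have haj : (i₂ - j).val < 2*T+1 := ZMod.val_lt _
    rw [heq, ZMod.val_add, hneg, Nat.mod_eq_of_lt (by omega)]
    omega
  set G : Finset (ZMod (2*T+1)) := Eᶜ with hGdef
  have hGcard : T + 1 ≤ G.card := by
    have h : G.card = 2*T+1 - E.card := by
      rw [hGdef, Finset.card_compl, ZMod.card]
    omega
  set Bs := Finset.univ.filter (fun j : ZMod (2*T+1) => (i₂ - j).val < s) with hBs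
  have hBcard : Bs.card ≤ s := by
    have h := Finset.card_le_card_of_injOn (fun j : ZMod (2*T+1) => (i₂ - j).val)
      (s := Bs) (t := Finset.range s)
      (by intro j hj; simp only [hBs, Finset.mem_coe, Finset.mem_filter] at hj
          simpa using hj.2)
      (by intro a ha b hb hab
          have : i₂ - a = i₂ - b := ZMod.val_injective _ hab
          exact sub_right_inj.mp this)
    simpa using h
  have hb1 : (G ∩ Bs).card + candFreqB T s xr i₁ i₂ ξ₁ ≤ s := by
    set C := Finset.univ.filter
      (fun j : ZMod (2*T+1) => (i₂ - j).val < s ∧ xr i₁ j = ξ₁) with hC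
    have hCeq : candFreqB T s xr i₁ i₂ ξ₁ = C.card := by
      rw [candFreqB, hC]
    have hdisj : Disjoint (G ∩ Bs) C := by
      rw [Finset.disjoint_left]
      intro j hj hj'
      simp only [hGdef, hBs, Finset.mem_inter, Finset.mem_compl, Finset.mem_filter,
        Finset.mem_univ, true_and] at hj
      simp only [hC, Finset.mem_filter, Finset.mem_univ, true_and] at hj'
      exact hne (hj'.2.symm.trans (hgood i₁ j (key j hj'.1) hj.1))
    have hsub : (G ∩ Bs) ∪ C ⊆ Bs := by
      intro j hj
      rcases Finset.mem_union.mp hj with h | h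
      · exact (Finset.mem_inter.mp h).2
      · simp only [hC, Finset.mem_filter, Finset.mem_univ, true_and] at h
        simp only [hBs, Finset.mem_filter, Finset.mem_univ, true_and]
        exact h.1
    calc (G ∩ Bs).card + candFreqB T s xr i₁ i₂ ξ₁
        = ((G ∩ Bs) ∪ C).card := by rw [hCeq, Finset.card_union_of_disjoint hdisj]
      _ ≤ Bs.card := Finset.card_le_card hsub
      _ ≤ s := hBcard
  have hb2 : (G \ Bs).card ≤ candFreqA T s xr i₂ ξ₂ := by
    refine le_trans ?_ (hξ₂ (x i₂))
    rw [candFreqA]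
    apply Finset.card_le_card
    intro j hj
    simp only [hGdef, hBs, Finset.mem_sdiff, Finset.mem_compl, Finset.mem_filter,
      Finset.mem_univ, true_and, not_lt] at hj
    simp only [Finset.mem_filter, Finset.mem_univ, true_and]
    exact ⟨by omega, hgood i₂ j (by omega) hj.1⟩
  have hsplit : (G ∩ Bs).card + (G \ Bs).card = G.card :=
    Finset.card_inter_add_card_sdiff G Bs
  omega
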